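/- If Q is a d×d Kolmogorov matrix and P^τ = I + τQ with τn → t as τ → 0 and n → ∞, then (P^τ)^n converges to the matrix exponential e^{tQ}. -/

import Mathlib

open NormedSpace Filter Nat

variable {A : Type*} [NormedRing A] [NormedAlgebra ℝ A] [CompleteSpace A] [NormOneClass A]

lemma my_norm_exp_le (a : A) : ‖exp a‖ ≤ Real.exp ‖a‖ := by
  rw [exp_eq_tsum ℝ]
  refine (norm_tsum_le_tsum_norm (norm_expSeries_summable' a)).trans ?_
  rw [Real.exp_eq_exp_ℝ, exp_eq_tsum_div]
  refine Summable.tsum_le_tsum (fun n => ?_) (norm_expSeries_summable' a)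
    (Real.summable_pow_div_factorial ‖a‖)
  rw [norm_smul, norm_inv, Real.norm_natCast, div_eq_inv_mul]
  exact mul_le_mul_of_nonneg_left (norm_pow_le a n) (by positivity)

lemma my_exp_remainder (a : A) : ‖exp a - 1 - a‖ ≤ ‖a‖ ^ 2 * Real.exp ‖a‖ := by
  have hs := expSeries_summable' (𝕂 := ℝ) a
  have h0 : exp a - 1 - a = ∑' n : ℕ, ((n + 2)! : ℝ)⁻¹ • a ^ (n + 2) := by
    have h2 := Summable.sum_add_tsum_nat_add (f := fun n => ((n)! : ℝ)⁻¹ • a ^ n) 2 hs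
    rw [exp_eq_tsum ℝ]
    simp only
    rw [← h2]
    simp [Finset.sum_range_succ, Nat.factorial]
    abel
  rw [h0]
  have hsn : Summable fun n : ℕ => ‖((n + 2)! : ℝ)⁻¹ • a ^ (n + 2)‖ :=
    (summable_nat_add_iff 2).2 (norm_expSeries_summable' a)
  refine (norm_tsum_le_tsum_norm hsn).trans ?_
  have hb : Summable fun n : ℕ => ‖a‖ ^ 2 * (‖a‖ ^ n / n !) :=
    (Real.summable_pow_div_factorial ‖a‖).mul_left _
  refine (Summable.tsum_le_tsum (fun n => ?_) hsn hb).trans ?_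
  · rw [norm_smul, norm_inv, Real.norm_natCast]
    have h1 : ‖a ^ (n + 2)‖ ≤ ‖a‖ ^ 2 * ‖a‖ ^ n := by
      refine (norm_pow_le a (n + 2)).trans ?_
      rw [pow_add, mul_comm]
    have h2 : ((n ! : ℝ))⁻¹ ≤ ((n ! : ℝ))⁻¹ := le_refl _
    have h3 : (((n + 2)! : ℝ))⁻¹ ≤ ((n ! : ℝ))⁻¹ := by
      apply inv_anti₀ (by positivity)
      exact_mod_cast Nat.factorial_le (by omega)
    calc (((n + 2)! : ℝ))⁻¹ * ‖a ^ (n + 2)‖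
        ≤ ((n ! : ℝ))⁻¹ * (‖a‖ ^ 2 * ‖a‖ ^ n) := by
          apply mul_le_mul h3 h1 (norm_nonneg _) (by positivity)
      _ = ‖a‖ ^ 2 * (‖a‖ ^ n / n !) := by ring
  · rw [tsum_mul_left, Real.exp_eq_exp_ℝ, exp_eq_tsum_div]

lemma my_pow_sub_pow {x y : A} (h : Commute x y) {M : ℝ} (hx : ‖x‖ ≤ M) (hy : ‖y‖ ≤ M)
    (hM : 0 ≤ M) (n : ℕ) : ‖x ^ n - y ^ n‖ ≤ n * M ^ (n - 1) * ‖x - y‖ := by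
  rw [← h.geom_sum₂_mul]
  refine (norm_mul_le _ _).trans ?_
  refine mul_le_mul_of_nonneg_right ?_ (norm_nonneg _)
  refine (norm_sum_le _ _).trans ?_
  have : ∀ i ∈ Finset.range n, ‖x ^ i * y ^ (n - 1 - i)‖ ≤ M ^ (n - 1) := by
    intro i hi
    rw [Finset.mem_range] at hi
    calc ‖x ^ i * y ^ (n - 1 - i)‖ ≤ ‖x ^ i‖ * ‖y ^ (n - 1 - i)‖ := norm_mul_le _ _
      _ ≤ ‖x‖ ^ i * ‖y‖ ^ (n - 1 - i) :=
          mul_le_mul (norm_pow_le _ _) (norm_pow_le _ _) (norm_nonneg _) (by positivity)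
      _ ≤ M ^ i * M ^ (n - 1 - i) := by
          apply mul_le_mul (pow_le_pow_left₀ (norm_nonneg _) hx i)
            (pow_le_pow_left₀ (norm_nonneg _) hy _) (by positivity)
            (pow_nonneg hM _)
      _ = M ^ (n - 1) := by rw [← pow_add]; congr 1; omega
  refine (Finset.sum_le_sum this).trans ?_
  simp [mul_comm]

lemma my_main (Q : A) (t : ℝ) (τ : ℕ → ℝ) (n : ℕ → ℕ)
    (hpos : ∀ k, 0 < τ k)
    (hτ : Tendsto τ atTop (nhds 0))
    (hnt : Tendsto (fun k => (n k : ℝ) * τ k) atTop (nhds t)) :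
    Tendsto (fun k => (1 + τ k • Q) ^ n k) atTop (nhds (exp (t • Q))) := by
  letI : NormedAlgebra ℚ A := NormedAlgebra.restrictScalars ℚ ℝ A
  have h2 : Tendsto (fun k => exp (((n k : ℝ) * τ k) • Q)) atTop (nhds (exp (t • Q))) :=
    (exp_continuous.tendsto _).comp (hnt.smul_const Q)
  have key : Tendsto (fun k => (1 + τ k • Q) ^ n k - exp (((n k : ℝ) * τ k) • Q))
      atTop (nhds 0) := by
    have hg : Tendsto (fun k => (n k : ℝ) * τ k * τ k * ‖Q‖ ^ 2 *
        Real.exp ((n k : ℝ) * τ k * ‖Q‖ + τ k * ‖Q‖)) atTop (nhds 0) := by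
      have h3 := ((hnt.mul hτ).mul_const (‖Q‖ ^ 2)).mul
        ((Real.continuous_exp.tendsto _).comp ((hnt.mul_const ‖Q‖).add (hτ.mul_const ‖Q‖)))
      simpa [mul_assoc] using h3
    apply squeeze_zero_norm _ hg
    intro k
    set a : A := τ k • Q with ha
    set N := n k with hN
    have hna : ‖a‖ = τ k * ‖Q‖ := by
      rw [ha, norm_smul, Real.norm_eq_abs, abs_of_pos (hpos k)]
    have hexpn : exp (((N : ℝ) * τ k) • Q) = (exp a) ^ N := by
      rw [mul_smul, Nat.cast_smul_eq_nsmul, exp_nsmul]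
    set E := Real.exp ‖a‖ with hE
    have hE1 : (1 : ℝ) ≤ E := Real.one_le_exp (norm_nonneg a)
    have hE0 : (0 : ℝ) ≤ E := zero_le_one.trans hE1
    have hx : ‖1 + a‖ ≤ E := by
      refine (norm_add_le _ _).trans ?_
      rw [norm_one, add_comm]
      exact Real.add_one_le_exp ‖a‖
    have hy : ‖exp a‖ ≤ E := my_norm_exp_le a
    have hcomm : Commute (1 + a) (exp a) :=
      (Commute.one_left _).add_left ((Commute.refl a).exp_right)
    have hrem : ‖(1 + a) - exp a‖ ≤ ‖a‖ ^ 2 * E := by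
      rw [norm_sub_rev]
      calc ‖exp a - (1 + a)‖ = ‖exp a - 1 - a‖ := by rw [sub_sub]
        _ ≤ ‖a‖ ^ 2 * E := my_exp_remainder a
    calc ‖(1 + a) ^ N - exp (((N : ℝ) * τ k) • Q)‖
        = ‖(1 + a) ^ N - (exp a) ^ N‖ := by rw [hexpn]
      _ ≤ N * E ^ (N - 1) * ‖(1 + a) - exp a‖ := my_pow_sub_pow hcomm hx hy hE0 N
      _ ≤ N * E ^ N * (‖a‖ ^ 2 * E) := by
          apply mul_le_mul _ hrem (norm_nonneg _) (by positivity)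
          exact mul_le_mul_of_nonneg_left (pow_le_pow_right₀ hE1 (Nat.sub_le N 1))
            (Nat.cast_nonneg N)
      _ = ((N : ℝ) * τ k * τ k * ‖Q‖ ^ 2) * (E ^ N * E) := by rw [hna]; ring
      _ = (N : ℝ) * τ k * τ k * ‖Q‖ ^ 2 * Real.exp ((N : ℝ) * τ k * ‖Q‖ + τ k * ‖Q‖) := by
          rw [hE, ← Real.exp_nat_mul, ← Real.exp_add, hna]; ring_nf
  have := key.add h2
  simpa using this

/-- If `Q` is a Kolmogorov matrix and `P^τ = I + τ Q`, with `τ → 0`, `n → ∞` and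
`n τ → t`, then `(P^τ)^n` converges to the matrix exponential `e^{tQ}`. -/
theorem stmt1 {d : ℕ} (Q : Matrix (Fin d) (Fin d) ℝ)
    (hoff : ∀ i j, i ≠ j → 0 ≤ Q i j)
    (hrow : ∀ i, ∑ j, Q i j = 0)
    (t : ℝ) (τ : ℕ → ℝ) (n : ℕ → ℕ)
    (hpos : ∀ k, 0 < τ k)
    (hτ : Filter.Tendsto τ Filter.atTop (nhds 0))
    (hn : Filter.Tendsto n Filter.atTop Filter.atTop)
    (hnt : Filter.Tendsto (fun k => (n k : ℝ) * τ k) Filter.atTop (nhds t)) :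
    Filter.Tendsto (fun k => (1 + τ k • Q) ^ n k) Filter.atTop
      (nhds (NormedSpace.exp (t • Q))) := by
  rcases Nat.eq_zero_or_pos d with hd | hd
  · subst hd
    haveI : Subsingleton (Matrix (Fin 0) (Fin 0) ℝ) :=
      ⟨fun a b => by ext i; exact i.elim0⟩
    have h : (fun k => (1 + τ k • Q) ^ n k) = fun _ => NormedSpace.exp (t • Q) := by
      funext k; exact Subsingleton.elim _ _
    rw [h]
    exact tendsto_const_nhds
  · haveI : Nonempty (Fin d) := ⟨⟨0, hd⟩⟩
    letI : SeminormedRing (Matrix (Fin d) (Fin d) ℝ) := Matrix.linftyOpSemiNormedRing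
    letI : NormedRing (Matrix (Fin d) (Fin d) ℝ) := Matrix.linftyOpNormedRing
    letI : NormedAlgebra ℝ (Matrix (Fin d) (Fin d) ℝ) := Matrix.linftyOpNormedAlgebra
    exact my_main Q t τ n hpos hτ hnt
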